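/- Let h_1, h_2 be nonzero real numbers with h_1/h_2 irrational, and let f : ℝ → ℝ be continuous. Then f is a polynomial of degree at most m if and only if Δ_{h_1}^{m+1} f(x) = 0 and Δ_{h_2}^{m+1} f(x) = 0 for all x ∈ ℝ. -/

import Mathlib

open Finset Function
open scoped fwdDiff

-- sum in the statement equals iterated forward difference
lemma mp_sum_eq_fwdDiff (n : ℕ) (h : ℝ) (f : ℝ → ℝ) (x : ℝ) :
    ∑ k ∈ Finset.range (n + 1), (n.choose k : ℝ) * (-1) ^ (n - k) * f (x + k * h)
      = (fwdDiff h)^[n] f x := by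
  rw [fwdDiff_iter_eq_sum_shift]
  refine Finset.sum_congr rfl fun k _ => ?_
  have : (k : ℕ) • h = (k : ℝ) * h := by simp [nsmul_eq_mul]
  rw [this, zsmul_eq_mul]
  push_cast
  ring

-- pointwise subtraction
lemma mp_fwdDiff_iter_sub (h : ℝ) (f g : ℝ → ℝ) (n : ℕ) (x : ℝ) :
    (fwdDiff h)^[n] (fun y => f y - g y) x = (fwdDiff h)^[n] f x - (fwdDiff h)^[n] g x := by
  induction n generalizing f g x with
  | zero => simp
  | succ n ih =>
    rw [Function.iterate_succ_apply, Function.iterate_succ_apply (f := fwdDiff h) (n := n) (x := f),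
      Function.iterate_succ_apply (f := fwdDiff h) (n := n) (x := g)]
    have : fwdDiff h (fun y => f y - g y) = fun y => fwdDiff h f y - fwdDiff h g y := by
      funext y; simp [fwdDiff]; ring
    rw [this, ih]

lemma mp_continuous_fwdDiff_iter (h : ℝ) (f : ℝ → ℝ) (hf : Continuous f) (n : ℕ) :
    Continuous ((fwdDiff h)^[n] f) := by
  induction n generalizing f with
  | zero => simpa using hf
  | succ n ih =>
    rw [Function.iterate_succ_apply]
    exact ih _ ((hf.comp (continuous_id.add continuous_const)).sub hf)

-- Δ^[n] kills x^j for j < n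
lemma mp_fwdDiff_pow_lt (h : ℝ) : ∀ n : ℕ, ∀ j < n, ∀ x : ℝ,
    (fwdDiff h)^[n] (fun y : ℝ => y ^ j) x = 0 := by
  intro n
  induction n with
  | zero => intro j hj; omega
  | succ n ih =>
    intro j hj x
    have hexp : fwdDiff h (fun y : ℝ => y ^ j)
        = ∑ i ∈ Finset.range j, fun y : ℝ => ((j.choose i : ℝ) * h ^ (j - i)) * y ^ i := by
      funext y
      simp only [fwdDiff]
      rw [Finset.sum_apply, add_pow, Finset.sum_range_succ]
      simp only [Nat.sub_self, pow_zero, Nat.choose_self, Nat.cast_one, mul_one, one_mul]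
      rw [add_sub_cancel_right]
      exact Finset.sum_congr rfl fun i _ => by ring
    rw [Function.iterate_succ_apply, hexp, fwdDiff_iter_finset_sum]
    rw [Finset.sum_apply]
    refine Finset.sum_eq_zero fun i hi => ?_
    have hi' : i < n := lt_of_lt_of_le (Finset.mem_range.mp hi) (by omega)
    have : (fun y : ℝ => ((j.choose i : ℝ) * h ^ (j - i)) * y ^ i)
        = ((j.choose i : ℝ) * h ^ (j - i)) • (fun y : ℝ => y ^ i) := by
      funext y; simp [smul_eq_mul]
    rw [this, fwdDiff_iter_const_smul]
    simp [ih i hi' x]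

lemma mp_fwdDiff_pow_self (h : ℝ) : ∀ n : ℕ, ∀ x : ℝ,
    (fwdDiff h)^[n] (fun y : ℝ => y ^ n) x = (n.factorial : ℝ) * h ^ n := by
  intro n
  induction n with
  | zero => intro x; simp
  | succ n ih =>
    intro x
    have hexp : fwdDiff h (fun y : ℝ => y ^ (n + 1))
        = ∑ i ∈ Finset.range (n + 1),
            fun y : ℝ => (((n+1).choose i : ℝ) * h ^ (n + 1 - i)) * y ^ i := by
      funext y
      simp only [fwdDiff]
      rw [Finset.sum_apply, add_pow, Finset.sum_range_succ]
      simp only [Nat.sub_self, pow_zero, Nat.choose_self, Nat.cast_one, mul_one, one_mul]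
      rw [add_sub_cancel_right]
      exact Finset.sum_congr rfl fun i _ => by ring
    rw [Function.iterate_succ_apply, hexp, fwdDiff_iter_finset_sum, Finset.sum_apply,
      Finset.sum_range_succ]
    have hkill : ∀ i ∈ Finset.range n,
        (fwdDiff h)^[n] (fun y : ℝ => (((n+1).choose i : ℝ) * h ^ (n + 1 - i)) * y ^ i) x = 0 := by
      intro i hi
      have : (fun y : ℝ => (((n+1).choose i : ℝ) * h ^ (n + 1 - i)) * y ^ i)
          = (((n+1).choose i : ℝ) * h ^ (n + 1 - i)) • (fun y : ℝ => y ^ i) := by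
        funext y; simp [smul_eq_mul]
      rw [this, fwdDiff_iter_const_smul]
      simp [mp_fwdDiff_pow_lt h n i (Finset.mem_range.mp hi) x]
    rw [Finset.sum_eq_zero hkill, zero_add]
    have : (fun y : ℝ => (((n+1).choose n : ℝ) * h ^ (n + 1 - n)) * y ^ n)
        = (((n+1).choose n : ℝ) * h ^ (n + 1 - n)) • (fun y : ℝ => y ^ n) := by
      funext y; simp [smul_eq_mul]
    rw [this, fwdDiff_iter_const_smul]
    simp only [Pi.smul_apply, smul_eq_mul, ih x]
    rw [Nat.choose_succ_self_right]
    have : n + 1 - n = 1 := by omega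
    rw [this]
    rw [Nat.factorial_succ]
    push_cast
    ring

-- Δ^[m+1] kills polynomials of degree ≤ m
lemma mp_fwdDiff_poly (h : ℝ) (m : ℕ) (p : Polynomial ℝ) (hdeg : p.degree ≤ m) (x : ℝ) :
    (fwdDiff h)^[m + 1] (fun y => p.eval y) x = 0 := by
  have hnd : p.natDegree ≤ m := Polynomial.natDegree_le_iff_degree_le.mpr hdeg
  have heval : (fun y : ℝ => p.eval y)
      = ∑ i ∈ Finset.range (m + 1), fun y : ℝ => p.coeff i * y ^ i := by
    funext y
    rw [Polynomial.eval_eq_sum_range' (lt_of_le_of_lt hnd (Nat.lt_succ_self m)), Finset.sum_apply]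
  rw [heval, fwdDiff_iter_finset_sum, Finset.sum_apply]
  refine Finset.sum_eq_zero fun i hi => ?_
  have : (fun y : ℝ => p.coeff i * y ^ i) = (p.coeff i) • (fun y : ℝ => y ^ i) := by
    funext y; simp [smul_eq_mul]
  rw [this, fwdDiff_iter_const_smul]
  have h0 := mp_fwdDiff_pow_lt h (m+1) i (Finset.mem_range.mp hi) x
  simp only [Pi.smul_apply, smul_eq_mul, h0, mul_zero]

-- periodic factor passes through
lemma mp_fwdDiff_periodic_mul (h : ℝ) (c u : ℝ → ℝ) (hc : ∀ x, c (x + h) = c x) :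
    ∀ n : ℕ, ∀ x : ℝ, (fwdDiff h)^[n] (fun y => c y * u y) x = c x * (fwdDiff h)^[n] u x := by
  intro n
  induction n generalizing u with
  | zero => simp
  | succ n ih =>
    intro x
    have : fwdDiff h (fun y => c y * u y) = fun y => c y * fwdDiff h u y := by
      funext y; simp only [fwdDiff, hc y]; ring
    rw [Function.iterate_succ_apply, this, ih (fwdDiff h u) x,
      ← Function.iterate_succ_apply]

-- decomposition: f = ∑ a_k(x) x^k with a_k h-periodic continuous
lemma mp_decomp (h : ℝ) (hh : h ≠ 0) : ∀ m : ℕ, ∀ f : ℝ → ℝ, Continuous f →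
    (∀ x, (fwdDiff h)^[m + 1] f x = 0) →
    ∃ a : ℕ → ℝ → ℝ, (∀ k, Continuous (a k)) ∧ (∀ k x, a k (x + h) = a k x) ∧
      ∀ x, f x = ∑ k ∈ Finset.range (m + 1), a k x * x ^ k := by
  intro m
  induction m with
  | zero =>
    intro f hf hΔ
    refine ⟨fun _ => f, fun _ => hf, fun k x => ?_, fun x => by simp⟩
    have := hΔ x
    simp only [Nat.zero_add, Function.iterate_one, fwdDiff] at this
    linarith
  | succ m ih =>
    intro f hf hΔ
    set K : ℝ := ((m + 1).factorial : ℝ) * h ^ (m + 1) with hK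
    set c : ℝ → ℝ := fun x => (fwdDiff h)^[m + 1] f x / K with hc
    have hccont : Continuous c := (mp_continuous_fwdDiff_iter h f hf (m + 1)).div_const K
    have hcper : ∀ x, c (x + h) = c x := by
      intro x
      have h2 : (fwdDiff h)^[m + 2] f x = 0 := hΔ x
      rw [Function.iterate_succ_apply'] at h2
      simp only [fwdDiff] at h2
      simp only [hc]
      have : (fwdDiff h)^[m + 1] f (x + h) = (fwdDiff h)^[m + 1] f x := by linarith
      rw [this]
    set g : ℝ → ℝ := fun x => f x - c x * x ^ (m + 1) with hg
    have hgcont : Continuous g := hf.sub (hccont.mul (continuous_pow (m + 1)))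
    have hgΔ : ∀ x, (fwdDiff h)^[m + 1] g x = 0 := by
      intro x
      rw [hg]
      rw [mp_fwdDiff_iter_sub h f (fun y => c y * y ^ (m + 1)) (m + 1) x]
      rw [mp_fwdDiff_periodic_mul h c (fun y => y ^ (m + 1)) hcper (m + 1) x]
      rw [mp_fwdDiff_pow_self h (m + 1) x]
      have hKne : K ≠ 0 :=
        mul_ne_zero (Nat.cast_ne_zero.mpr (Nat.factorial_ne_zero _)) (pow_ne_zero _ hh)
      rw [← hK, hc, div_mul_cancel₀ _ hKne, sub_self]
    obtain ⟨a, hacont, haper, hasum⟩ := ih g hgcont hgΔ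
    refine ⟨fun k => if k = m + 1 then c else a k, ?_, ?_, ?_⟩
    · intro k; by_cases hk : k = m + 1 <;> simp [hk, hccont, hacont k]
    · intro k x; by_cases hk : k = m + 1 <;> simp [hk, hcper x, haper k x]
    · intro x
      rw [Finset.sum_range_succ]
      have : ∑ k ∈ Finset.range (m + 1), (if k = m + 1 then c else a k) x * x ^ k
          = ∑ k ∈ Finset.range (m + 1), a k x * x ^ k := by
        refine Finset.sum_congr rfl fun k hk => ?_
        have : k ≠ m + 1 := by have := Finset.mem_range.mp hk; omega
        simp [this]
      rw [this, ← hasum x]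
      simp [hg]

-- continuous periodic functions are bounded
lemma mp_bounded (a : ℝ → ℝ) (ha : Continuous a) (h : ℝ) (hh : h ≠ 0)
    (hper : ∀ x, a (x + h) = a x) : ∃ M : ℝ, 0 ≤ M ∧ ∀ x, |a x| ≤ M := by
  have hper' : Function.Periodic a |h| := by
    rcases abs_choice h with h' | h'
    · intro x; rw [h']; exact hper x
    · intro x
      rw [h']
      have := hper (x + -h)
      rw [show x + -h + h = x by ring] at this
      exact this.symm
  have hpos : 0 < |h| := abs_pos.mpr hh
  obtain ⟨M, hM⟩ := (isCompact_Icc (a := (0:ℝ)) (b := |h|)).exists_bound_of_continuousOn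
    ha.continuousOn
  refine ⟨max M 0, le_max_right _ _, fun x => ?_⟩
  obtain ⟨y, hy, hxy⟩ := hper'.exists_mem_Ico₀ hpos x
  rw [hxy]
  have := hM y (Set.mem_Icc_of_Ico hy)
  rw [Real.norm_eq_abs] at this
  exact le_trans this (le_max_left _ _)

-- a periodic function small at infinity vanishes
lemma mp_periodic_small (w : ℝ → ℝ) (h : ℝ) (hh : h ≠ 0)
    (hper : ∀ x, w (x + h) = w x)
    (hsmall : ∀ ε : ℝ, 0 < ε → ∃ R : ℝ, ∀ x, R ≤ |x| → |w x| ≤ ε) :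
    ∀ x, w x = 0 := by
  have hiter : ∀ (n : ℕ) (x : ℝ), w (x + n * h) = w x := by
    intro n
    induction n with
    | zero => simp
    | succ n ih =>
      intro x
      have : x + (n + 1 : ℕ) * h = (x + h) + n * h := by push_cast; ring
      rw [this, ih (x + h), hper x]
  intro x
  have key : ∀ ε : ℝ, 0 < ε → |w x| ≤ ε := by
    intro ε hε
    obtain ⟨R, hR⟩ := hsmall ε hε
    have hhpos : 0 < |h| := abs_pos.mpr hh
    set n : ℕ := ⌈(|R| + |x|) / |h|⌉₊ with hn
    have hnh : |R| + |x| ≤ n * |h| := by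
      have h1 : (|R| + |x|) / |h| ≤ (n : ℝ) := Nat.le_ceil _
      calc |R| + |x| = (|R| + |x|) / |h| * |h| := by field_simp
        _ ≤ (n : ℝ) * |h| := mul_le_mul_of_nonneg_right h1 (le_of_lt hhpos)
    have hbig : R ≤ |x + n * h| := by
      have h2 : |(n : ℝ) * h| ≤ |x + n * h| + |x| := by
        have h3 := abs_sub (x + (n : ℝ) * h) x
        rw [add_sub_cancel_left] at h3
        exact h3
      rw [abs_mul, Nat.abs_cast] at h2
      have h4 : R ≤ |R| := le_abs_self R
      linarith
    rw [← hiter n x]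
    exact hR _ hbig
  by_contra hne
  have hpos : 0 < |w x| := abs_pos.mpr hne
  have := key (|w x| / 2) (by positivity)
  linarith

-- doubly periodic continuous functions are constant
lemma mp_doubly_periodic (v : ℝ → ℝ) (hv : Continuous v)
    (h₁ h₂ : ℝ) (hh₁ : h₁ ≠ 0) (hh₂ : h₂ ≠ 0) (hirr : Irrational (h₁ / h₂))
    (p1 : ∀ x, v (x + h₁) = v x) (p2 : ∀ x, v (x + h₂) = v x) :
    ∀ x, v x = v 0 := by
  set S : AddSubgroup ℝ :=
    { carrier := {t : ℝ | ∀ x, v (x + t) = v x}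
      zero_mem' := by intro x; simp
      add_mem' := by
        intro s t hs ht x
        rw [← add_assoc, ht (x + s)]
        exact hs x
      neg_mem' := by
        intro t ht x
        have := ht (x + -t)
        rw [show x + -t + t = x by ring] at this
        exact this.symm } with hS
  have hclosed : IsClosed (S : Set ℝ) := by
    have : (S : Set ℝ) = ⋂ x : ℝ, {t : ℝ | v (x + t) = v x} := by
      ext t
      constructor
      · intro ht
        exact Set.mem_iInter.mpr fun x => ht x
      · intro ht x
        exact Set.mem_iInter.mp ht x
    rw [this]
    exact isClosed_iInter fun x =>
      isClosed_eq (hv.comp (continuous_const.add continuous_id)) continuous_const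
  have hdense : Dense (S : Set ℝ) := by
    rcases S.dense_or_cyclic with hd | ⟨a, ha⟩
    · exact hd
    · exfalso
      have h1S : h₁ ∈ S := p1
      have h2S : h₂ ∈ S := p2
      rw [ha, AddSubgroup.mem_closure_singleton] at h1S h2S
      obtain ⟨p, hp⟩ := h1S
      obtain ⟨q, hq⟩ := h2S
      have hane : a ≠ 0 := by
        rintro rfl
        rw [smul_zero] at hp
        exact hh₁ hp.symm
      have hq0 : q ≠ 0 := by
        rintro rfl
        rw [zero_zsmul] at hq
        exact hh₂ hq.symm
      have hqne : (q : ℝ) ≠ 0 := Int.cast_ne_zero.mpr hq0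
      have : h₁ / h₂ = (p : ℝ) / (q : ℝ) := by
        rw [← hp, ← hq, zsmul_eq_mul, zsmul_eq_mul]
        rw [mul_div_mul_right _ _ hane]
      apply hirr
      exact ⟨(p : ℚ) / (q : ℚ), by push_cast; rw [this]⟩
  have hall : ∀ t : ℝ, t ∈ S := by
    have huniv : (S : Set ℝ) = Set.univ := hclosed.closure_eq ▸ hdense.closure_eq
    intro t
    have h5 : t ∈ (S : Set ℝ) := by rw [huniv]; trivial
    exact h5
  intro x
  have := hall x 0
  rw [zero_add] at this
  exact this

lemma mp_coeffs_const (h₁ h₂ : ℝ) (hh₁ : h₁ ≠ 0) (hh₂ : h₂ ≠ 0)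
    (hirr : Irrational (h₁ / h₂)) :
    ∀ m : ℕ, ∀ a c : ℕ → ℝ → ℝ,
    (∀ k, Continuous (a k)) → (∀ k x, a k (x + h₁) = a k x) →
    (∀ k, Continuous (c k)) → (∀ k x, c k (x + h₂) = c k x) →
    (∀ x, ∑ k ∈ Finset.range (m + 1), a k x * x ^ k
        = ∑ k ∈ Finset.range (m + 1), c k x * x ^ k) →
    ∀ k, k ≤ m → ∀ x, a k x = a k 0 := by
  intro m
  induction m with
  | zero =>
    intro a c hacont haper hccont hcper heq k hk x
    interval_cases k
    have heq' : ∀ y, a 0 y = c 0 y := by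
      intro y; have := heq y; simpa using this
    have hper2 : ∀ y, a 0 (y + h₂) = a 0 y := by
      intro y; rw [heq' (y + h₂), hcper 0 y, heq' y]
    exact mp_doubly_periodic (a 0) (hacont 0) h₁ h₂ hh₁ hh₂ hirr (haper 0) hper2 x
  | succ m ih =>
    intro a c hacont haper hccont hcper heq
    set e : ℝ → ℝ := fun x => a (m + 1) x - c (m + 1) x with he
    -- bounds on all coefficients
    choose Ba hBa using fun k => mp_bounded (a k) (hacont k) h₁ hh₁ (haper k)
    choose Bc hBc using fun k => mp_bounded (c k) (hccont k) h₂ hh₂ (hcper k)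
    set C : ℝ := ∑ k ∈ Finset.range (m + 1), (Ba k + Bc k) with hC
    have hC0 : 0 ≤ C := Finset.sum_nonneg fun k _ => add_nonneg (hBa k).1 (hBc k).1
    have hsum0 : ∀ x, e x * x ^ (m + 1)
        = ∑ k ∈ Finset.range (m + 1), (c k x - a k x) * x ^ k := by
      intro x
      have h0 : (∑ k ∈ Finset.range (m + 1), a k x * x ^ k)
            + a (m + 1) x * x ^ (m + 1)
          = (∑ k ∈ Finset.range (m + 1), c k x * x ^ k)
            + c (m + 1) x * x ^ (m + 1) := by
        rw [← Finset.sum_range_succ, ← Finset.sum_range_succ]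
        exact heq x
      calc e x * x ^ (m + 1)
          = a (m + 1) x * x ^ (m + 1) - c (m + 1) x * x ^ (m + 1) := by
            simp only [he]; ring
        _ = (∑ k ∈ Finset.range (m + 1), c k x * x ^ k)
            - ∑ k ∈ Finset.range (m + 1), a k x * x ^ k := by linarith
        _ = ∑ k ∈ Finset.range (m + 1), (c k x - a k x) * x ^ k := by
            rw [← Finset.sum_sub_distrib]
            exact Finset.sum_congr rfl fun k _ => by ring
    have hebound : ∀ x : ℝ, 1 ≤ |x| → |e x| ≤ C / |x| := by
      intro x hx
      have hx0 : (0:ℝ) < |x| := lt_of_lt_of_le one_pos hx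
      have h1 : |e x * x ^ (m + 1)| ≤ C * |x| ^ m := by
        rw [hsum0 x, hC, Finset.sum_mul]
        refine le_trans (Finset.abs_sum_le_sum_abs _ _) (Finset.sum_le_sum fun k hk => ?_)
        have hk' : k ≤ m := by have := Finset.mem_range.mp hk; omega
        have hb : |c k x - a k x| ≤ Ba k + Bc k := by
          have := abs_sub (c k x) (a k x)
          have h2 := (hBa k).2 x
          have h3 := (hBc k).2 x
          linarith
        calc |(c k x - a k x) * x ^ k| = |c k x - a k x| * |x| ^ k := by
              rw [abs_mul, abs_pow]
          _ ≤ (Ba k + Bc k) * |x| ^ k :=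
              mul_le_mul_of_nonneg_right hb (by positivity)
          _ ≤ (Ba k + Bc k) * |x| ^ m :=
              mul_le_mul_of_nonneg_left (pow_le_pow_right₀ hx hk')
                (add_nonneg (hBa k).1 (hBc k).1)
      rw [le_div_iff₀ hx0]
      have h2 : |e x| * |x| * |x| ^ m = |e x * x ^ (m + 1)| := by
        rw [abs_mul, abs_pow]; ring
      have hxm : (0:ℝ) < |x| ^ m := by positivity
      have h3 : |e x| * |x| * |x| ^ m ≤ C * |x| ^ m := by rw [h2]; exact h1
      exact le_of_mul_le_mul_right h3 hxm
    have hesmall : ∀ ε : ℝ, 0 < ε → ∃ R : ℝ, ∀ x, R ≤ |x| → |e x| ≤ ε := by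
      intro ε hε
      refine ⟨max 1 (C / ε), fun x hx => ?_⟩
      have hx1 : 1 ≤ |x| := le_trans (le_max_left _ _) hx
      have hx0 : (0:ℝ) < |x| := lt_of_lt_of_le one_pos hx1
      refine le_trans (hebound x hx1) ?_
      rw [div_le_iff₀ hx0]
      have h4 : C / ε ≤ |x| := le_trans (le_max_right _ _) hx
      have h5 : ε * (C / ε) ≤ ε * |x| := mul_le_mul_of_nonneg_left h4 (le_of_lt hε)
      have h6 : ε * (C / ε) = C := by field_simp
      linarith
    -- a (m+1) is also h₂-periodic
    set w1 : ℝ → ℝ := fun x => a (m + 1) (x + h₂) - a (m + 1) x with hw1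
    have hw1per : ∀ x, w1 (x + h₁) = w1 x := by
      intro x
      simp only [hw1]
      rw [show x + h₁ + h₂ = (x + h₂) + h₁ by ring, haper (m+1) (x + h₂), haper (m+1) x]
    have hw1e : ∀ x, w1 x = e (x + h₂) - e x := by
      intro x
      simp only [hw1, he]
      rw [hcper (m+1) x]
      ring
    have hw1small : ∀ ε : ℝ, 0 < ε → ∃ R : ℝ, ∀ x, R ≤ |x| → |w1 x| ≤ ε := by
      intro ε hε
      obtain ⟨R, hR⟩ := hesmall (ε / 2) (by positivity)
      refine ⟨|R| + |h₂| + 1, fun x hx => ?_⟩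
      have hx1 : R ≤ |x| := by
        have := le_abs_self R
        have := abs_nonneg h₂
        linarith
      have hx2 : R ≤ |x + h₂| := by
        have h7 : |x| - |h₂| ≤ |x + h₂| := by
          have := abs_sub (x + h₂) h₂
          rw [add_sub_cancel_right] at this
          linarith
        have := le_abs_self R
        linarith
      rw [hw1e x]
      have := hR x hx1
      have := hR (x + h₂) hx2
      calc |e (x + h₂) - e x| ≤ |e (x + h₂)| + |e x| := abs_sub _ _
        _ ≤ ε := by linarith
    have hw10 : ∀ x, w1 x = 0 := mp_periodic_small w1 h₁ hh₁ hw1per hw1small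
    have haper2 : ∀ x, a (m + 1) (x + h₂) = a (m + 1) x := by
      intro x
      have := hw10 x
      simp only [hw1] at this
      linarith
    have haconst : ∀ x, a (m + 1) x = a (m + 1) 0 :=
      mp_doubly_periodic (a (m+1)) (hacont (m+1)) h₁ h₂ hh₁ hh₂ hirr (haper (m+1)) haper2
    -- c (m+1) equals the same constant
    set w2 : ℝ → ℝ := fun x => c (m + 1) x - a (m + 1) 0 with hw2
    have hw2per : ∀ x, w2 (x + h₂) = w2 x := by
      intro x; simp only [hw2]; rw [hcper (m+1) x]
    have hw2small : ∀ ε : ℝ, 0 < ε → ∃ R : ℝ, ∀ x, R ≤ |x| → |w2 x| ≤ ε := by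
      intro ε hε
      obtain ⟨R, hR⟩ := hesmall ε hε
      refine ⟨R, fun x hx => ?_⟩
      have h8 : w2 x = -e x := by
        simp only [hw2, he]
        rw [← haconst x]
        ring
      rw [h8, abs_neg]
      exact hR x hx
    have hw20 : ∀ x, w2 x = 0 := mp_periodic_small w2 h₂ hh₂ hw2per hw2small
    have hcconst : ∀ x, c (m + 1) x = a (m + 1) 0 := by
      intro x
      have := hw20 x
      simp only [hw2] at this
      linarith
    -- now peel off the top coefficient and use the inductive hypothesis
    have heq' : ∀ x, ∑ k ∈ Finset.range (m + 1), a k x * x ^ k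
        = ∑ k ∈ Finset.range (m + 1), c k x * x ^ k := by
      intro x
      have h0 : (∑ k ∈ Finset.range (m + 1), a k x * x ^ k)
            + a (m + 1) x * x ^ (m + 1)
          = (∑ k ∈ Finset.range (m + 1), c k x * x ^ k)
            + c (m + 1) x * x ^ (m + 1) := by
        rw [← Finset.sum_range_succ, ← Finset.sum_range_succ]
        exact heq x
      rw [haconst x, hcconst x] at h0
      linarith
    have hlow := ih a c hacont haper hccont hcper heq'
    intro k hk x
    rcases Nat.lt_succ_iff_lt_or_eq.mp (Nat.lt_succ_of_le hk) with hk' | rfl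
    · exact hlow k (Nat.lt_succ_iff.mp hk') x
    · exact haconst x

theorem montel_popoviciu_one_variable (m : ℕ)
    (h₁ h₂ : ℝ) (hh₁ : h₁ ≠ 0) (hh₂ : h₂ ≠ 0) (hirr : Irrational (h₁ / h₂))
    (f : ℝ → ℝ) (hcont : Continuous f) :
    (∃ p : Polynomial ℝ, p.degree ≤ m ∧ ∀ x : ℝ, f x = p.eval x) ↔
      (∀ x : ℝ,
        (∑ k ∈ Finset.range (m + 2),
          ((m + 1).choose k : ℝ) * (-1) ^ (m + 1 - k) * f (x + k * h₁) = 0) ∧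
        (∑ k ∈ Finset.range (m + 2),
          ((m + 1).choose k : ℝ) * (-1) ^ (m + 1 - k) * f (x + k * h₂) = 0)) := by
  have hfp : ∀ (p : Polynomial ℝ), p.degree ≤ m → (∀ x : ℝ, f x = p.eval x) →
      ∀ (h : ℝ) (x : ℝ), (fwdDiff h)^[m + 1] f x = 0 := by
    intro p hdeg hp h x
    have : f = fun y => p.eval y := funext hp
    rw [this]
    exact mp_fwdDiff_poly h m p hdeg x
  constructor
  · rintro ⟨p, hdeg, hp⟩ x
    constructor
    · have := mp_sum_eq_fwdDiff (m + 1) h₁ f x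
      rw [this]
      exact hfp p hdeg hp h₁ x
    · have := mp_sum_eq_fwdDiff (m + 1) h₂ f x
      rw [this]
      exact hfp p hdeg hp h₂ x
  · intro H
    have hΔ1 : ∀ x, (fwdDiff h₁)^[m + 1] f x = 0 := by
      intro x
      rw [← mp_sum_eq_fwdDiff (m + 1) h₁ f x]
      exact (H x).1
    have hΔ2 : ∀ x, (fwdDiff h₂)^[m + 1] f x = 0 := by
      intro x
      rw [← mp_sum_eq_fwdDiff (m + 1) h₂ f x]
      exact (H x).2
    obtain ⟨a, hacont, haper, hasum⟩ := mp_decomp h₁ hh₁ m f hcont hΔ1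
    obtain ⟨c, hccont, hcper, hcsum⟩ := mp_decomp h₂ hh₂ m f hcont hΔ2
    have heq : ∀ x, ∑ k ∈ Finset.range (m + 1), a k x * x ^ k
        = ∑ k ∈ Finset.range (m + 1), c k x * x ^ k := by
      intro x; rw [← hasum x, ← hcsum x]
    have hconst := mp_coeffs_const h₁ h₂ hh₁ hh₂ hirr m a c hacont haper hccont hcper heq
    refine ⟨∑ k ∈ Finset.range (m + 1), Polynomial.C (a k 0) * Polynomial.X ^ k, ?_, ?_⟩
    · refine le_trans (Polynomial.degree_sum_le _ _) (Finset.sup_le fun k hk => ?_)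
      refine le_trans (Polynomial.degree_C_mul_X_pow_le k (a k 0)) ?_
      have hk' : k ≤ m := Nat.lt_succ_iff.mp (Finset.mem_range.mp hk)
      exact_mod_cast hk'
    · intro x
      rw [hasum x]
      rw [Polynomial.eval_finset_sum]
      refine Finset.sum_congr rfl fun k hk => ?_
      have hk' : k ≤ m := Nat.lt_succ_iff.mp (Finset.mem_range.mp hk)
      rw [hconst k hk' x]
      simp
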